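/- Let A be densely defined and closed with A*A ≥ εI > 0 and R ∈ B(H), and let 𝔠 be a conjugation (antilinear involution with (𝔠u, v) = (𝔠v, u)) on H such that 𝔠 A*A 𝔠 = A*A and 𝔠 R 𝔠 = R. Then λ₀ is an eigenvalue of iG_{A,R} if and only if -conj(λ₀) is an eigenvalue of iG_{A,R}. -/

import Mathlib

/-- `lam` is an eigenvalue of `iG_{A,R} = i((0,I),(-A*A,-R))` (with domain
`dom(A*A) ⊕ dom(A)`), where the unbounded operator `A` (resp. its adjoint `A*`) is
encoded by a total linear map `A` (resp. `As`) together with its domain `domA`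
(resp. `domAs`). -/
def IsEigenvalueIG {H : Type*} [NormedAddCommGroup H] [InnerProductSpace ℂ H]
    (domA domAs : Submodule ℂ H) (A As : H →ₗ[ℂ] H) (R : H →L[ℂ] H) (lam : ℂ) : Prop :=
  ∃ u v : H, u ∈ domA ∧ A u ∈ domAs ∧ v ∈ domA ∧ ¬(u = 0 ∧ v = 0) ∧
    Complex.I • v = lam • u ∧ Complex.I • (-(As (A u)) - R v) = lam • v

lemma stmt_4_aux {H : Type*} [NormedAddCommGroup H] [InnerProductSpace ℂ H]
    (domA domAs : Submodule ℂ H) (A As : H →ₗ[ℂ] H) (R : H →L[ℂ] H)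
    (C : H → H)
    (hCadd : ∀ x y, C (x + y) = C x + C y)
    (hCsmul : ∀ (a : ℂ) (x : H), C (a • x) = (starRingEnd ℂ) a • C x)
    (hCinv : ∀ x, C (C x) = x)
    (hCdom : ∀ x ∈ domA, C x ∈ domA)
    (hCAA : ∀ x, x ∈ domA → A x ∈ domAs →
      A (C x) ∈ domAs ∧ As (A (C x)) = C (As (A x)))
    (hCR : ∀ x, C (R (C x)) = R x)
    (lam0 : ℂ)
    (h : IsEigenvalueIG domA domAs A As R lam0) :
    IsEigenvalueIG domA domAs A As R (-(starRingEnd ℂ) lam0) := by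
  obtain ⟨u, v, hu, hAu, hv, hnz, h1, h2⟩ := h
  have hCneg : ∀ x : H, C (-x) = -C x := by
    intro x
    have := hCsmul (-1) x
    simpa using this
  have hC0 : C 0 = 0 := by
    have := hCsmul 0 0
    simpa using this
  refine ⟨C u, C v, hCdom u hu, (hCAA u hu hAu).1, hCdom v hv, ?_, ?_, ?_⟩
  · rintro ⟨hu0, hv0⟩
    exact hnz ⟨by rw [← hCinv u, hu0, hC0], by rw [← hCinv v, hv0, hC0]⟩
  · calc Complex.I • C v = C ((-Complex.I) • v) := by rw [hCsmul]; simp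
      _ = C ((-lam0) • u) := by rw [neg_smul, neg_smul, h1]
      _ = (-(starRingEnd ℂ) lam0) • C u := by rw [hCsmul]; simp
  · have hRC : R (C v) = C (R v) := by
      have := hCR (C v)
      rw [hCinv] at this
      exact this.symm
    rw [(hCAA u hu hAu).2, hRC]
    calc Complex.I • (-(C (As (A u))) - C (R v))
        = Complex.I • C (-(As (A u)) - R v) := by
          rw [sub_eq_add_neg, sub_eq_add_neg, hCadd, hCneg, hCneg]
      _ = C ((-Complex.I) • (-(As (A u)) - R v)) := by rw [hCsmul]; simp
      _ = C ((-lam0) • v) := by rw [neg_smul, neg_smul, h2]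
      _ = (-(starRingEnd ℂ) lam0) • C v := by rw [hCsmul]; simp

/-- Let `A` be densely defined and closed with `A*A ≥ εI > 0`,
`R ∈ B(H)`, and let `𝔠 = C` be a conjugation (antilinear involution with
`(𝔠u, v) = (𝔠v, u)`) on `H` such that `𝔠 A*A 𝔠 = A*A` and `𝔠 R 𝔠 = R`.  Then `λ₀` is
an eigenvalue of `iG_{A,R}` if and only if `-conj(λ₀)` is an eigenvalue of `iG_{A,R}`. -/
theorem stmt_4 {H : Type*} [NormedAddCommGroup H] [InnerProductSpace ℂ H] [CompleteSpace H]
    (domA domAs : Submodule ℂ H) (A As : H →ₗ[ℂ] H) (R : H →L[ℂ] H)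
    (hdense : Dense (domA : Set H))
    (hclosed : IsClosed {p : H × H | p.1 ∈ domA ∧ p.2 = A p.1})
    (hadj : ∀ u ∈ domA, ∀ v ∈ domAs, (inner ℂ (As v) u : ℂ) = inner ℂ v (A u))
    (ε : ℝ) (hε : 0 < ε)
    (hcoer : ∀ u ∈ domA, ε * ‖u‖ ^ 2 ≤ ‖A u‖ ^ 2)
    (C : H → H)
    (hCadd : ∀ x y, C (x + y) = C x + C y)
    (hCsmul : ∀ (a : ℂ) (x : H), C (a • x) = (starRingEnd ℂ) a • C x)
    (hCinv : ∀ x, C (C x) = x)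
    (hCsym : ∀ x y, (inner ℂ (C x) y : ℂ) = inner ℂ (C y) x)
    (hCdom : ∀ x ∈ domA, C x ∈ domA)
    (hCAA : ∀ x, x ∈ domA → A x ∈ domAs →
      A (C x) ∈ domAs ∧ As (A (C x)) = C (As (A x)))
    (hCR : ∀ x, C (R (C x)) = R x)
    (lam0 : ℂ) :
    IsEigenvalueIG domA domAs A As R lam0 ↔
      IsEigenvalueIG domA domAs A As R (-(starRingEnd ℂ) lam0) := by
  constructor
  · exact stmt_4_aux domA domAs A As R C hCadd hCsmul hCinv hCdom hCAA hCR lam0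
  · intro h
    have := stmt_4_aux domA domAs A As R C hCadd hCsmul hCinv hCdom hCAA hCR
      (-(starRingEnd ℂ) lam0) h
    simpa using this
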